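/- Let G be a graph, M* a matching in G, and call a path P in G compatible if for every edge {v,w} ∈ M*, either P contains the edge {v,w} or P is vertex-disjoint from {v,w}. Let P = (v_1, ..., v_s) be a compatible path, and suppose {v_s, v_i} ∈ E(G) where v_i is not an endpoint of any edge of M* and 1 ≤ i ≤ s−2. Then the rotated path P' = (v_1, ..., v_i, v_s, v_{s−1}, ..., v_{i+1}) is also a compatible path in G with the same vertex set as P. -/

import Mathlib

variable {V : Type*}

private lemma infix_pair_append {v w : V} {l₁ l₂ : List V}
    (h : [v, w] <:+: l₁ ++ l₂) :
    [v, w] <:+: l₁ ∨ [v, w] <:+: l₂ ∨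
      (l₁.getLast? = some v ∧ l₂.head? = some w) := by
  induction l₁ with
  | nil => exact Or.inr (Or.inl (by simpa using h))
  | cons a l₁ ih =>
    rw [List.cons_append, List.infix_cons_iff] at h
    rcases h with h | h
    · -- [v,w] is a prefix of a :: (l₁ ++ l₂)
      rcases h with ⟨t, ht⟩
      simp only [List.cons_append, List.cons.injEq] at ht
      obtain ⟨rfl, hrest⟩ := ht
      cases l₁ with
      | nil =>
        right; right
        constructor
        · simp
        · cases l₂ with
          | nil => simp at hrest
          | cons b l₂ =>
            simp only [List.nil_append, List.cons.injEq] at hrest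
            simp [hrest.1]
      | cons b l₁ =>
        simp only [List.cons_append, List.cons.injEq] at hrest
        obtain ⟨rfl, -⟩ := hrest
        exact Or.inl ⟨[], l₁, rfl⟩
    · rcases ih h with h' | h' | h'
      · exact Or.inl (h'.trans (List.infix_cons (List.infix_refl _)))
      · exact Or.inr (Or.inl h')
      · right; right
        refine ⟨?_, h'.2⟩
        cases l₁ with
        | nil => simp at h'
        | cons b l₁ => simpa using h'.1

/-- A list of vertices `P` is a path of `G` compatible with the matching `M`:
for every matching edge `{v,w}`, either `P` traverses it (as consecutive
vertices) or `P` avoids both of its endpoints. -/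
def CompatiblePath (G : SimpleGraph V) (M : Set (Sym2 V)) (P : List V) : Prop :=
  P.Nodup ∧ P.Chain' G.Adj ∧
    ∀ v w : V, s(v, w) ∈ M →
      ([v, w] <:+: P ∨ [w, v] <:+: P ∨ (v ∉ P ∧ w ∉ P))

/-- A Pósa rotation preserves compatibility: if `P = xs ++ ys` is a compatible
path (with `v_i` the last vertex of `xs`, `v_s` the last vertex of `ys`,
`|ys| ≥ 2`), `{v_s, v_i}` is an edge of `G`, and `v_i` is unmatched by `M`, then
the rotated path `P' = xs ++ ys.reverse` is also a compatible path with the same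
vertex set. -/
theorem rotation_preserves_compatible (G : SimpleGraph V) (M : Set (Sym2 V))
    (hM : ∀ e ∈ M, (¬ e.IsDiag) ∧ e ∈ G.edgeSet)
    (hMmatch : ∀ e ∈ M, ∀ f ∈ M, e ≠ f → ∀ v : V, v ∈ e → v ∉ f)
    (xs ys : List V) (hxs : xs ≠ []) (hys : ys ≠ [])
    (hlen : 2 ≤ ys.length)
    (hpath : CompatiblePath G M (xs ++ ys))
    (hadj : G.Adj (ys.getLast hys) (xs.getLast hxs))
    (hunmatched : ∀ e ∈ M, xs.getLast hxs ∉ e) :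
    CompatiblePath G M (xs ++ ys.reverse) ∧
      ∀ v : V, v ∈ xs ++ ys.reverse ↔ v ∈ xs ++ ys := by
  obtain ⟨hnodup, hchain, hmatch⟩ := hpath
  have hmem : ∀ v : V, v ∈ xs ++ ys.reverse ↔ v ∈ xs ++ ys := by
    intro v; simp [List.mem_append]
  refine ⟨⟨?_, ?_, ?_⟩, hmem⟩
  · rw [List.nodup_append] at hnodup ⊢
    refine ⟨hnodup.1, List.nodup_reverse.mpr hnodup.2.1, ?_⟩
    intro a ha b hb
    exact hnodup.2.2 a ha b (List.mem_reverse.mp hb)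
  · unfold List.Chain' at hchain ⊢
    rw [List.isChain_append] at hchain ⊢
    refine ⟨hchain.1, ?_, ?_⟩
    · rw [List.isChain_reverse]
      exact hchain.2.1.imp (fun a b h => h.symm)
    · intro x hx y hy
      rw [List.getLast?_eq_getLast hxs, Option.mem_some_iff] at hx
      rw [List.head?_reverse, List.getLast?_eq_getLast hys, Option.mem_some_iff] at hy
      subst hx; subst hy
      exact hadj.symm
  · intro v w hvw
    rcases hmatch v w hvw with h | h | h
    · rcases infix_pair_append h with h' | h' | h'
      · exact Or.inl (h'.trans (List.prefix_append _ _).isInfix)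
      · right; left
        have h2 : [w, v] <:+: ys.reverse := by
          simpa using List.reverse_infix.mpr h'
        exact h2.trans (List.suffix_append _ _).isInfix
      · exfalso
        apply hunmatched _ hvw
        rw [List.getLast?_eq_getLast hxs, Option.some_inj] at h'
        rw [h'.1]; exact Sym2.mem_mk_left v w
    · rcases infix_pair_append h with h' | h' | h'
      · exact Or.inr (Or.inl (h'.trans (List.prefix_append _ _).isInfix))
      · left
        have h2 : [v, w] <:+: ys.reverse := by
          simpa using List.reverse_infix.mpr h'
        exact h2.trans (List.suffix_append _ _).isInfix
      · exfalso
        apply hunmatched _ hvw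
        rw [List.getLast?_eq_getLast hxs, Option.some_inj] at h'
        rw [h'.1]; exact Sym2.mem_mk_right v w
    · exact Or.inr (Or.inr (by simpa [hmem] using h))
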